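/- Suppose m ≥ 2 and 5 ≤ g ≤ 2m+1 (g odd). Then for every integer weight vector (ρ_0,…,ρ_{g−1}) with ρ_0+⋯+ρ_{g−1} = 0, there exists a monomial basis of U_m of nonpositive ρ-weight. (The 'if' direction of Theorem 6.1: the m-th Hilbert point of the canonically embedded rosary of odd genus g ≥ 5 is semistable when g ≤ 2m+1.) -/

import Mathlib

/-!
The 'if' direction of Theorem 6.1: for the canonically embedded rosary of odd genus
`g` with `5 ≤ g ≤ 2m+1` and `m ≥ 2`, and every integer weight vector
`(ρ₀,…,ρ_{g-1})` (weights `ρ₀,…,ρ_{g-2}` on `ω₀,…,ω_{g-2}` and `ρ_{g-1}` on `η`)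
with total sum `0`, there exists a monomial basis of `U_m` of nonpositive ρ-weight.
-/

noncomputable section
set_option maxHeartbeats 1000000

/-- The product ring `P = ∏_{i ∈ ℤ/(g-1)} ℂ(u)`. -/
abbrev Pro (g : ℕ) : Type := ZMod (g - 1) → RatFunc ℂ

/-- `ω_i := e_i + u^(-2)·e_(i+1)`. -/
def omegaR (g : ℕ) (i : ZMod (g - 1)) : Pro g :=
  Pi.single i 1 + Pi.single (i + 1) (RatFunc.X ^ (-2 : ℤ))

/-- `η := Σ_i u^(-1)·e_i`, i.e. the constant tuple `u^(-1)`. -/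
def etaR (g : ℕ) : Pro g := fun _ => RatFunc.X ^ (-1 : ℤ)

/-- Index type for the `g` canonical variables `ω₀,…,ω_{g-2}, η`. -/
abbrev CIdx (g : ℕ) : Type := ZMod (g - 1) ⊕ Unit

/-- The canonical variables. -/
def varC (g : ℕ) : CIdx g → Pro g :=
  Sum.elim (omegaR g) (fun _ => etaR g)

/-- `U_m`: the `ℂ`-span of all degree-`m` monomials in `ω₀,…,ω_{g-2}, η`. -/
def UC (g m : ℕ) : Submodule ℂ (Pro g) :=
  Submodule.span ℂ
    {p : Pro g | ∃ σ : Multiset (CIdx g), Multiset.card σ = m ∧ p = (σ.map (varC g)).prod}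

/-- Degree-`m` canonical monomials, as multisets of `m` variable indices. -/
abbrev CMon (g m : ℕ) := Sym (CIdx g) m

/-- A finite set of degree-`m` canonical monomials is a monomial basis of `U_m` if its
images in `P` are linearly independent over `ℂ` and span `U_m`. -/
def IsMonBasisC (g m : ℕ) (S : Finset (CMon g m)) : Prop :=
  LinearIndependent ℂ (fun s : S => (((s : CMon g m)).1.map (varC g)).prod) ∧
  Submodule.span ℂ ((fun s : CMon g m => (s.1.map (varC g)).prod) '' S) = UC g m

namespace Rosary

open scoped Classical

variable (g : ℕ)

def NN (σ : Multiset (CIdx g)) (j : ZMod (g - 1)) : ℕ :=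
  2 * σ.count (Sum.inl (j - 1)) + σ.count (Sum.inr ())

def Adm (σ : Multiset (CIdx g)) (j : ZMod (g - 1)) : Prop :=
  ∀ i : ZMod (g - 1), Sum.inl i ∈ σ → i = j - 1 ∨ i = j

def Vfun (σ : Multiset (CIdx g)) : Pro g :=
  fun j => if Adm g σ j then RatFunc.X ^ (-(NN g σ j : ℤ)) else 0

def EE (i : ZMod (g - 1)) (d : ℕ) : Pro g := Pi.single i (RatFunc.X ^ (-(d : ℤ)))

lemma one_ne_zero' (hg : 5 ≤ g) : (1 : ZMod (g - 1)) ≠ 0 := by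
  intro h
  have h1 : ((1 : ℕ) : ZMod (g - 1)) = 0 := by exact_mod_cast h
  rw [ZMod.natCast_eq_zero_iff] at h1
  have := Nat.le_of_dvd one_pos h1
  omega

lemma two_ne_zero' (hg : 5 ≤ g) : (2 : ZMod (g - 1)) ≠ 0 := by
  intro h
  have h1 : ((2 : ℕ) : ZMod (g - 1)) = 0 := by exact_mod_cast h
  rw [ZMod.natCast_eq_zero_iff] at h1
  have := Nat.le_of_dvd two_pos h1
  omega

lemma sub_one_ne (hg : 5 ≤ g) (j : ZMod (g - 1)) : j - 1 ≠ j := by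
  intro h
  exact one_ne_zero' g hg (by linear_combination -h)

lemma add_one_ne (hg : 5 ≤ g) (j : ZMod (g - 1)) : j ≠ j + 1 := by
  intro h
  exact one_ne_zero' g hg (by linear_combination -h)

lemma varC_inl_apply (i j : ZMod (g - 1)) :
    varC g (Sum.inl i) j =
      (if j = i then 1 else 0) + (if j = i + 1 then RatFunc.X ^ (-2 : ℤ) else 0) := by
  show omegaR g i j = _
  rw [omegaR]
  simp [Pi.single_apply]

/-- The fundamental product formula. -/
theorem prod_eq_V (hg : 5 ≤ g) (σ : Multiset (CIdx g)) :
    (σ.map (varC g)).prod = Vfun g σ := by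
  induction σ using Multiset.induction_on with
  | empty =>
    funext j
    have hAdm : Adm g 0 j := by intro i hi; simp at hi
    simp [Vfun, NN, hAdm]
  | cons v σ ih =>
    rw [Multiset.map_cons, Multiset.prod_cons, ih]
    funext j
    have hXne : (RatFunc.X : RatFunc ℂ) ≠ 0 := RatFunc.X_ne_zero
    rw [Pi.mul_apply]
    rcases v with i | u
    · by_cases hi1 : i = j - 1
      · -- contributes X^{-2}
        have hj : j = i + 1 := by rw [hi1]; ring
        have hvar : varC g (Sum.inl i) j = RatFunc.X ^ (-2 : ℤ) := by
          rw [varC_inl_apply]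
          have hne : j ≠ i := by rw [hi1]; exact fun h => sub_one_ne g hg j h.symm
          rw [if_neg hne, if_pos hj, zero_add]
        have hAdm : Adm g (Sum.inl i ::ₘ σ) j ↔ Adm g σ j := by
          constructor
          · exact fun h p hp => h p (Multiset.mem_cons_of_mem hp)
          · intro h p hp
            rcases Multiset.mem_cons.1 hp with h' | h'
            · obtain rfl : p = i := by simpa using h'
              exact Or.inl hi1
            · exact h p h'
        have hNN : NN g (Sum.inl i ::ₘ σ) j = NN g σ j + 2 := by
          have e1 : (Sum.inl (j - 1) : CIdx g) = Sum.inl i := by rw [hi1]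
          have e2 : (Sum.inr () : CIdx g) ≠ Sum.inl i := by simp
          rw [NN, NN, e1, Multiset.count_cons_self, Multiset.count_cons_of_ne e2]
          ring
        rw [hvar, Vfun, Vfun, hNN]
        by_cases hA : Adm g σ j
        · rw [if_pos hA, if_pos (hAdm.2 hA), ← zpow_add₀ hXne]
          congr 1
          push_cast
          ring
        · rw [if_neg hA, if_neg (fun h => hA (hAdm.1 h)), mul_zero]
      · by_cases hi2 : i = j
        · -- contributes 1
          have hvar : varC g (Sum.inl i) j = 1 := by
            rw [varC_inl_apply]
            have hne : j ≠ i + 1 := by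
              intro h
              exact hi1 (by rw [h]; ring)
            rw [if_pos hi2.symm, if_neg hne, add_zero]
          have hAdm : Adm g (Sum.inl i ::ₘ σ) j ↔ Adm g σ j := by
            constructor
            · exact fun h p hp => h p (Multiset.mem_cons_of_mem hp)
            · intro h p hp
              rcases Multiset.mem_cons.1 hp with h' | h'
              · obtain rfl : p = i := by simpa using h'
                exact Or.inr hi2
              · exact h p h'
          have hNN : NN g (Sum.inl i ::ₘ σ) j = NN g σ j := by
            have e1 : (Sum.inl (j - 1) : CIdx g) ≠ Sum.inl i := by
              simp only [ne_eq, Sum.inl.injEq]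
              intro h
              exact hi1 h.symm
            have e2 : (Sum.inr () : CIdx g) ≠ Sum.inl i := by simp
            rw [NN, NN, Multiset.count_cons_of_ne e1, Multiset.count_cons_of_ne e2]
          rw [hvar, Vfun, Vfun, hNN, one_mul]
          by_cases hA : Adm g σ j
          · rw [if_pos hA, if_pos (hAdm.2 hA)]
          · rw [if_neg hA, if_neg (fun h => hA (hAdm.1 h))]
        · -- dead variable
          have hvar : varC g (Sum.inl i) j = 0 := by
            rw [varC_inl_apply]
            have hne : j ≠ i + 1 := by
              intro h
              exact hi1 (by rw [h]; ring)
            have hne2 : j ≠ i := fun h => hi2 h.symm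
            rw [if_neg hne2, if_neg hne, add_zero]
          have hAdm : ¬ Adm g (Sum.inl i ::ₘ σ) j := by
            intro h
            rcases h i (Multiset.mem_cons_self _ _) with h' | h'
            · exact hi1 h'
            · exact hi2 h'
          rw [hvar, Vfun, Vfun, if_neg hAdm, zero_mul]
    · -- eta
      have hvar : varC g (Sum.inr u) j = RatFunc.X ^ (-1 : ℤ) := rfl
      have hAdm : Adm g (Sum.inr u ::ₘ σ) j ↔ Adm g σ j := by
        constructor
        · exact fun h p hp => h p (Multiset.mem_cons_of_mem hp)
        · intro h p hp
          rcases Multiset.mem_cons.1 hp with h' | h'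
          · exact absurd h' (by simp)
          · exact h p h'
      have hNN : NN g (Sum.inr u ::ₘ σ) j = NN g σ j + 1 := by
        obtain rfl : u = () := rfl
        have e1 : (Sum.inl (j - 1) : CIdx g) ≠ Sum.inr () := by simp
        rw [NN, NN, Multiset.count_cons_of_ne e1, Multiset.count_cons_self]
        omega
      rw [hvar, Vfun, Vfun, hNN]
      by_cases hA : Adm g σ j
      · rw [if_pos hA, if_pos (hAdm.2 hA), ← zpow_add₀ hXne]
        congr 1
        push_cast
        ring
      · rw [if_neg hA, if_neg (fun h => hA (hAdm.1 h)), mul_zero]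

/-! ### Standard monomials -/

def msM (i : ZMod (g - 1)) (a b k : ℕ) : Multiset (CIdx g) :=
  Multiset.replicate a (Sum.inl i) + Multiset.replicate b (Sum.inl (i + 1)) +
    Multiset.replicate k (Sum.inr ())

lemma card_msM (i : ZMod (g - 1)) (a b k : ℕ) : Multiset.card (msM g i a b k) = a + b + k := by
  simp [msM]

lemma count_inl_msM (i p : ZMod (g - 1)) (a b k : ℕ) :
    (msM g i a b k).count (Sum.inl p) =
      (if p = i then a else 0) + (if p = i + 1 then b else 0) := by
  rw [msM, Multiset.count_add, Multiset.count_add, Multiset.count_replicate,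
    Multiset.count_replicate, Multiset.count_replicate]
  simp only [Sum.inl.injEq, reduceCtorEq, if_false, add_zero, eq_comm]

lemma count_inr_msM (i : ZMod (g - 1)) (a b k : ℕ) :
    (msM g i a b k).count (Sum.inr ()) = k := by
  rw [msM]
  rw [Multiset.count_add, Multiset.count_add, Multiset.count_replicate,
    Multiset.count_replicate, Multiset.count_replicate]
  simp

lemma mem_inl_msM (i p : ZMod (g - 1)) (a b k : ℕ) :
    Sum.inl p ∈ msM g i a b k ↔ (1 ≤ a ∧ p = i) ∨ (1 ≤ b ∧ p = i + 1) := by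
  simp only [msM, Multiset.mem_add, Multiset.mem_replicate, ne_eq, Sum.inl.injEq,
    reduceCtorEq, and_false, or_false]
  constructor
  · rintro (⟨h1, h2⟩ | ⟨h1, h2⟩)
    · exact Or.inl ⟨by omega, h2⟩
    · exact Or.inr ⟨by omega, h2⟩
  · rintro (⟨h1, h2⟩ | ⟨h1, h2⟩)
    · exact Or.inl ⟨by omega, h2⟩
    · exact Or.inr ⟨by omega, h2⟩

lemma V_msM_pair (hg : 5 ≤ g) (i : ZMod (g - 1)) {a b : ℕ} (k : ℕ)
    (ha : 1 ≤ a) (hb : 1 ≤ b) :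
    Vfun g (msM g i a b k) = EE g (i + 1) (2 * a + k) := by
  funext j
  rw [Vfun, EE, Pi.single_apply]
  by_cases hj : j = i + 1
  · have hAdm : Adm g (msM g i a b k) j := by
      intro p hp
      rcases (mem_inl_msM g i p a b k).1 hp with ⟨_, rfl⟩ | ⟨_, rfl⟩
      · left; rw [hj]; ring
      · right; exact hj.symm
    rw [if_pos hAdm, if_pos hj]
    have hc1 : (msM g i a b k).count (Sum.inl (j - 1)) = a := by
      rw [count_inl_msM]
      have e1 : j - 1 = i := by rw [hj]; ring
      rw [if_pos e1, if_neg (by rw [e1]; exact add_one_ne g hg i), add_zero]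
    rw [NN, hc1, count_inr_msM]
  · rw [if_neg hj, if_neg]
    intro hAdm
    have h1 := hAdm i ((mem_inl_msM g i i a b k).2 (Or.inl ⟨ha, rfl⟩))
    have h2 := hAdm (i + 1) ((mem_inl_msM g i (i + 1) a b k).2 (Or.inr ⟨hb, rfl⟩))
    rcases h1 with h1 | h1
    · exact hj (by rw [h1]; ring)
    · rcases h2 with h2 | h2
      · exact two_ne_zero' g hg (by linear_combination h2 - h1)
      · exact one_ne_zero' g hg (by linear_combination h2 - h1)

lemma V_msM_one (hg : 5 ≤ g) (i : ZMod (g - 1)) {a : ℕ} (k : ℕ) (ha : 1 ≤ a) :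
    Vfun g (msM g i a 0 k) = EE g i k + EE g (i + 1) (2 * a + k) := by
  funext j
  rw [Vfun, Pi.add_apply, EE, EE, Pi.single_apply, Pi.single_apply]
  have hmem : ∀ p : ZMod (g - 1), Sum.inl p ∈ msM g i a 0 k ↔ p = i := by
    intro p
    rw [mem_inl_msM]
    constructor
    · rintro (⟨_, h⟩ | ⟨h, _⟩)
      · exact h
      · omega
    · exact fun h => Or.inl ⟨ha, h⟩
  by_cases hj1 : j = i
  · have hAdm : Adm g (msM g i a 0 k) j := by
      intro p hp
      right; rw [(hmem p).1 hp, hj1]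
    rw [if_pos hAdm, if_pos hj1, if_neg (by rw [hj1]; exact add_one_ne g hg i)]
    have hc1 : (msM g i a 0 k).count (Sum.inl (j - 1)) = 0 := by
      rw [count_inl_msM]
      have e1 : ¬ (j - 1 = i) := by rw [hj1]; exact sub_one_ne g hg i
      have e2 : ¬ (j - 1 = i + 1) := by
        rw [hj1]; intro h
        exact two_ne_zero' g hg (by linear_combination -h)
      rw [if_neg e1, if_neg e2]
    rw [NN, hc1, count_inr_msM, add_zero]
    norm_num
  · by_cases hj2 : j = i + 1
    · have hAdm : Adm g (msM g i a 0 k) j := by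
        intro p hp
        left; rw [(hmem p).1 hp, hj2]; ring
      rw [if_pos hAdm, if_neg hj1, if_pos hj2, zero_add]
      have hc1 : (msM g i a 0 k).count (Sum.inl (j - 1)) = a := by
        rw [count_inl_msM]
        have e1 : j - 1 = i := by rw [hj2]; ring
        rw [if_pos e1, if_neg (by rw [e1]; exact add_one_ne g hg i), add_zero]
      rw [NN, hc1, count_inr_msM]
    · rw [if_neg hj1, if_neg hj2, if_neg, add_zero]
      intro hAdm
      rcases hAdm i ((hmem i).2 rfl) with h | h
      · exact hj2 (by rw [h]; ring)
      · exact hj1 h.symm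

lemma V_msM_eta (i : ZMod (g - 1)) (k : ℕ) :
    Vfun g (msM g i 0 0 k) = fun _ => RatFunc.X ^ (-(k : ℤ)) := by
  funext j
  rw [Vfun]
  have hAdm : Adm g (msM g i 0 0 k) j := by
    intro p hp
    rw [mem_inl_msM] at hp
    rcases hp with ⟨h, _⟩ | ⟨h, _⟩ <;> omega
  rw [if_pos hAdm, NN, count_inr_msM]
  have hc1 : (msM g i 0 0 k).count (Sum.inl (j - 1)) = 0 := by
    rw [count_inl_msM]
    simp
  rw [hc1]
  norm_num

/-! ### Coefficient functionals -/

def coeffL (z : ℤ) : LaurentSeries ℂ →ₗ[ℂ] ℂ where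
  toFun f := f.coeff z
  map_add' x y := HahnSeries.coeff_add
  map_smul' c x := HahnSeries.coeff_smul

lemma coeffL_apply (z : ℤ) (f : LaurentSeries ℂ) : coeffL z f = f.coeff z := rfl

def laurentL : RatFunc ℂ →ₗ[ℂ] LaurentSeries ℂ where
  toFun f := (f : LaurentSeries ℂ)
  map_add' x y := map_add _ x y
  map_smul' c x := by
    simp only [RingHom.id_apply]
    rw [Algebra.smul_def, map_mul, ← HahnSeries.C_mul_eq_smul]
    congr 1
    rw [IsScalarTower.algebraMap_apply ℂ (Polynomial ℂ) (RatFunc ℂ) c,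
      ← IsScalarTower.algebraMap_apply]
    simp

lemma laurentL_apply (f : RatFunc ℂ) : laurentL f = (f : LaurentSeries ℂ) := rfl

lemma single_one_zpow (z : ℤ) :
    (HahnSeries.single (1 : ℤ) (1 : ℂ)) ^ z = HahnSeries.single z 1 := by
  have hpow : ∀ n : ℕ, (HahnSeries.single (1 : ℤ) (1 : ℂ)) ^ n = HahnSeries.single (n : ℤ) 1 := by
    intro n
    rw [HahnSeries.single_pow]
    norm_num
  rcases z with n | n
  · simpa using hpow n
  · rw [zpow_negSucc, hpow (n + 1)]
    symm
    apply eq_inv_of_mul_eq_one_left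
    rw [HahnSeries.single_mul_single, one_mul,
      show Int.negSucc n + ((n + 1 : ℕ) : ℤ) = 0 by rw [Int.negSucc_eq]; push_cast; ring]
    exact HahnSeries.single_zero_one

lemma coe_X_zpow (z : ℤ) :
    ((RatFunc.X ^ z : RatFunc ℂ) : LaurentSeries ℂ) = HahnSeries.single z 1 := by
  rw [map_zpow₀, RatFunc.coe_X, single_one_zpow]

def phiL (g : ℕ) (i : ZMod (g - 1)) (d : ℕ) : Pro g →ₗ[ℂ] ℂ :=
  (coeffL (-(d : ℤ))).comp (laurentL.comp (LinearMap.proj i))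

lemma phiL_EE (i i' : ZMod (g - 1)) (d d' : ℕ) :
    phiL g i d (EE g i' d') = if i = i' ∧ d = d' then 1 else 0 := by
  rw [phiL]
  simp only [LinearMap.comp_apply, LinearMap.proj_apply]
  rw [EE, Pi.single_apply]
  by_cases h1 : i = i'
  · rw [if_pos h1, laurentL_apply, coe_X_zpow, coeffL_apply, HahnSeries.coeff_single]
    by_cases h2 : d = d'
    · rw [if_pos (by omega), if_pos ⟨h1, h2⟩]
    · rw [if_neg (by omega), if_neg (by tauto)]
  · rw [if_neg h1, map_zero, map_zero, if_neg (by tauto)]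

lemma phiL_const (i : ZMod (g - 1)) (d k : ℕ) :
    phiL g i d (fun _ => RatFunc.X ^ (-(k : ℤ))) = if d = k then 1 else 0 := by
  rw [phiL]
  simp only [LinearMap.comp_apply, LinearMap.proj_apply]
  rw [laurentL_apply, coe_X_zpow, coeffL_apply, HahnSeries.coeff_single]
  by_cases h2 : d = k
  · rw [if_pos (by omega), if_pos h2]
  · rw [if_neg (by omega), if_neg h2]

/-! ### The construction -/

def pW (g : ℕ) (r : ZMod (g - 1) → ℤ) (i : ZMod (g - 1)) : ℤ := r (i - 1) + r i

def hiQ (g : ℕ) (s : ℤ) (r : ZMod (g - 1) → ℤ) (i : ZMod (g - 1)) : Prop :=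
  s < 0 ∧ 2 * s < pW g r i

def swapQ (g m : ℕ) (s : ℤ) (istar i : ZMod (g - 1)) (d : ℕ) : Prop :=
  s < 0 ∧ i = istar ∧ d = m

def kcN (g m : ℕ) (s : ℤ) (r : ZMod (g - 1) → ℤ) (i : ZMod (g - 1)) (d : ℕ) : ℕ :=
  if hiQ g s r i then min (d - 2) (2 * m - 2 - d) else d % 2

def acN (g m : ℕ) (s : ℤ) (r : ZMod (g - 1) → ℤ) (i : ZMod (g - 1)) (d : ℕ) : ℕ :=
  (d - kcN g m s r i d) / 2

def bcN (g m : ℕ) (s : ℤ) (r : ZMod (g - 1) → ℤ) (i : ZMod (g - 1)) (d : ℕ) : ℕ :=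
  m - acN g m s r i d - kcN g m s r i d

def pureM (g m : ℕ) (s : ℤ) (r : ZMod (g - 1) → ℤ) (i : ZMod (g - 1)) (d : ℕ) :
    Multiset (CIdx g) :=
  msM g (i - 1) (acN g m s r i d) (bcN g m s r i d) (kcN g m s r i d)

def mixedM (g m : ℕ) (i : ZMod (g - 1)) (d : ℕ) : Multiset (CIdx g) := msM g i (m - d) 0 d

def etaM (g m : ℕ) : Multiset (CIdx g) := msM g 0 0 0 m

def chooseM (g m : ℕ) (s : ℤ) (r : ZMod (g - 1) → ℤ) (istar i : ZMod (g - 1)) (d : ℕ) :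
    Multiset (CIdx g) :=
  if swapQ g m s istar i d then etaM g m
  else if hiQ g s r i ∧ d < m then mixedM g m i d
  else pureM g m s r i d

def fx1 (g m : ℕ) (i : ZMod (g - 1)) : Multiset (CIdx g) := msM g i m 0 0

def fx2 (g m : ℕ) (i : ZMod (g - 1)) : Multiset (CIdx g) := msM g i (m - 1) 0 1

abbrev Idx (g m : ℕ) : Type := (ZMod (g - 1) × Fin (2 * m - 3)) ⊕ (ZMod (g - 1) ⊕ ZMod (g - 1))

def FmM (g m : ℕ) (s : ℤ) (r : ZMod (g - 1) → ℤ) (istar : ZMod (g - 1)) :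
    Idx g m → Multiset (CIdx g) :=
  Sum.elim (fun x => chooseM g m s r istar x.1 ((x.2 : ℕ) + 2))
    (Sum.elim (fx1 g m) (fx2 g m))

def Hfn (g m : ℕ) (s : ℤ) (r : ZMod (g - 1) → ℤ) (istar : ZMod (g - 1)) (x : Idx g m) :
    Pro g :=
  ((FmM g m s r istar x).map (varC g)).prod

lemma Hfn_eq (g m : ℕ) (s : ℤ) (r : ZMod (g - 1) → ℤ) (istar : ZMod (g - 1)) (hg : 5 ≤ g)
    (x : Idx g m) : Hfn g m s r istar x = Vfun g (FmM g m s r istar x) :=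
  prod_eq_V g hg _

lemma pure_facts (g m : ℕ) (s : ℤ) (r : ZMod (g - 1) → ℤ) (i : ZMod (g - 1)) (d : ℕ)
    (hm : 2 ≤ m) (hd2 : 2 ≤ d) (hd : d ≤ 2 * m - 2) :
    1 ≤ acN g m s r i d ∧ 1 ≤ bcN g m s r i d ∧ 2 * acN g m s r i d + kcN g m s r i d = d ∧
      acN g m s r i d + bcN g m s r i d + kcN g m s r i d = m := by
  simp only [acN, bcN, kcN]
  split_ifs <;> omega

lemma V_pure (g m : ℕ) (s : ℤ) (r : ZMod (g - 1) → ℤ) (i : ZMod (g - 1)) (d : ℕ)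
    (hg : 5 ≤ g) (hm : 2 ≤ m) (hd2 : 2 ≤ d) (hd : d ≤ 2 * m - 2) :
    Vfun g (pureM g m s r i d) = EE g i d := by
  obtain ⟨h1, h2, h3, h4⟩ := pure_facts g m s r i d hm hd2 hd
  rw [pureM, V_msM_pair g hg _ _ h1 h2, sub_add_cancel, h3]

lemma V_mixed (g m : ℕ) (i : ZMod (g - 1)) (d : ℕ) (hg : 5 ≤ g) (hd2 : 2 ≤ d) (hdm : d < m) :
    Vfun g (mixedM g m i d) = EE g i d + EE g (i + 1) (2 * m - d) := by
  rw [mixedM, V_msM_one g hg i d (by omega), show 2 * (m - d) + d = 2 * m - d by omega]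

lemma V_etaM (g m : ℕ) : Vfun g (etaM g m) = fun _ => RatFunc.X ^ (-(m : ℤ)) :=
  V_msM_eta g 0 m

lemma V_fx1 (g m : ℕ) (i : ZMod (g - 1)) (hg : 5 ≤ g) (hm : 2 ≤ m) :
    Vfun g (fx1 g m i) = EE g i 0 + EE g (i + 1) (2 * m) := by
  rw [fx1, V_msM_one g hg i 0 (by omega), add_zero]

lemma V_fx2 (g m : ℕ) (i : ZMod (g - 1)) (hg : 5 ≤ g) (hm : 2 ≤ m) :
    Vfun g (fx2 g m i) = EE g i 1 + EE g (i + 1) (2 * m - 1) := by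
  rw [fx2, V_msM_one g hg i 1 (by omega), show 2 * (m - 1) + 1 = 2 * m - 1 by omega]

lemma V_choose_pure (g m : ℕ) (s : ℤ) (r : ZMod (g - 1) → ℤ) (istar i : ZMod (g - 1)) (d : ℕ)
    (hg : 5 ≤ g) (hm : 2 ≤ m) (hd2 : 2 ≤ d) (hd : d ≤ 2 * m - 2)
    (hns : ¬ swapQ g m s istar i d) (hnm : ¬ (hiQ g s r i ∧ d < m)) :
    Vfun g (chooseM g m s r istar i d) = EE g i d := by
  rw [chooseM, if_neg hns, if_neg hnm, V_pure g m s r i d hg hm hd2 hd]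

lemma V_choose_mixed (g m : ℕ) (s : ℤ) (r : ZMod (g - 1) → ℤ) (istar i : ZMod (g - 1)) (d : ℕ)
    (hg : 5 ≤ g) (hd2 : 2 ≤ d) (hmx : hiQ g s r i ∧ d < m) :
    Vfun g (chooseM g m s r istar i d) = EE g i d + EE g (i + 1) (2 * m - d) := by
  rw [chooseM, if_neg (fun h => by obtain ⟨_, _, h3⟩ := h; omega), if_pos hmx,
    V_mixed g m i d hg hd2 hmx.2]

lemma V_choose_swap (g m : ℕ) (s : ℤ) (r : ZMod (g - 1) → ℤ) (istar i : ZMod (g - 1)) (d : ℕ)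
    (hsw : swapQ g m s istar i d) :
    Vfun g (chooseM g m s r istar i d) = fun _ => RatFunc.X ^ (-(m : ℤ)) := by
  rw [chooseM, if_pos hsw, V_etaM]

/-! ### Linear independence -/

def posX (g m : ℕ) (i : ZMod (g - 1)) (t : Fin (2 * m - 3)) : Idx g m := Sum.inl (i, t)

def fxA (g m : ℕ) (i : ZMod (g - 1)) : Idx g m := Sum.inr (Sum.inl i)

def fxB (g m : ℕ) (i : ZMod (g - 1)) : Idx g m := Sum.inr (Sum.inr i)

section Ind

variable (g m : ℕ) (s : ℤ) (r : ZMod (g - 1) → ℤ) (istar : ZMod (g - 1))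

lemma Hfn_posX (hg : 5 ≤ g) (i : ZMod (g - 1)) (t : Fin (2 * m - 3)) :
    Hfn g m s r istar (posX g m i t) = Vfun g (chooseM g m s r istar i ((t : ℕ) + 2)) :=
  prod_eq_V g hg _

lemma Hfn_fxA (hg : 5 ≤ g) (i : ZMod (g - 1)) :
    Hfn g m s r istar (fxA g m i) = Vfun g (fx1 g m i) :=
  prod_eq_V g hg _

lemma Hfn_fxB (hg : 5 ≤ g) (i : ZMod (g - 1)) :
    Hfn g m s r istar (fxB g m i) = Vfun g (fx2 g m i) :=
  prod_eq_V g hg _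

lemma phi_posX_zero (hg : 5 ≤ g) (hm : 2 ≤ m) (j : ZMod (g - 1)) (dd : ℕ)
    (i' : ZMod (g - 1)) (t' : Fin (2 * m - 3))
    (hA : ¬ (j = i' ∧ dd = (t' : ℕ) + 2))
    (hB : ¬ (j = i' + 1 ∧ dd = 2 * m - ((t' : ℕ) + 2) ∧ (t' : ℕ) + 2 < m))
    (hC : ¬ (dd = m ∧ swapQ g m s istar i' ((t' : ℕ) + 2))) :
    phiL g j dd (Hfn g m s r istar (posX g m i' t')) = 0 := by
  have hd2 : 2 ≤ (t' : ℕ) + 2 := by omega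
  have hdu : (t' : ℕ) + 2 ≤ 2 * m - 2 := by have := t'.2; omega
  rw [Hfn_posX g m s r istar hg]
  by_cases hsw : swapQ g m s istar i' ((t' : ℕ) + 2)
  · rw [V_choose_swap g m s r istar i' _ hsw, phiL_const,
      if_neg (fun h => hC ⟨h, hsw⟩)]
  · by_cases hmx : hiQ g s r i' ∧ (t' : ℕ) + 2 < m
    · rw [V_choose_mixed g m s r istar i' _ hg hd2 hmx, map_add, phiL_EE, phiL_EE,
        if_neg hA, if_neg (fun h => hB ⟨h.1, h.2, hmx.2⟩), add_zero]
    · rw [V_choose_pure g m s r istar i' _ hg hm hd2 hdu hsw hmx, phiL_EE, if_neg hA]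

lemma phi_posX_self (hg : 5 ≤ g) (hm : 2 ≤ m) (i : ZMod (g - 1)) (t : Fin (2 * m - 3)) :
    phiL g i ((t : ℕ) + 2) (Hfn g m s r istar (posX g m i t)) = 1 := by
  have hd2 : 2 ≤ (t : ℕ) + 2 := by omega
  have hdu : (t : ℕ) + 2 ≤ 2 * m - 2 := by have := t.2; omega
  rw [Hfn_posX g m s r istar hg]
  by_cases hsw : swapQ g m s istar i ((t : ℕ) + 2)
  · rw [V_choose_swap g m s r istar i _ hsw, phiL_const, if_pos hsw.2.2]
  · by_cases hmx : hiQ g s r i ∧ (t : ℕ) + 2 < m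
    · rw [V_choose_mixed g m s r istar i _ hg hd2 hmx, map_add, phiL_EE, phiL_EE,
        if_pos ⟨rfl, rfl⟩, if_neg (fun h => by have := h.2; omega), add_zero]
    · rw [V_choose_pure g m s r istar i _ hg hm hd2 hdu hsw hmx, phiL_EE, if_pos ⟨rfl, rfl⟩]

lemma phi_fxA_zero (hg : 5 ≤ g) (hm : 2 ≤ m) (j : ZMod (g - 1)) (dd : ℕ) (i' : ZMod (g - 1))
    (hA : ¬ (j = i' ∧ dd = 0)) (hB : ¬ (j = i' + 1 ∧ dd = 2 * m)) :
    phiL g j dd (Hfn g m s r istar (fxA g m i')) = 0 := by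
  rw [Hfn_fxA g m s r istar hg, V_fx1 g m i' hg hm, map_add, phiL_EE, phiL_EE,
    if_neg hA, if_neg hB, add_zero]

lemma phi_fxA_self (hg : 5 ≤ g) (hm : 2 ≤ m) (i : ZMod (g - 1)) :
    phiL g i 0 (Hfn g m s r istar (fxA g m i)) = 1 := by
  rw [Hfn_fxA g m s r istar hg, V_fx1 g m i hg hm, map_add, phiL_EE, phiL_EE,
    if_pos ⟨rfl, rfl⟩, if_neg (fun h => by have := h.2; omega), add_zero]

lemma phi_fxB_zero (hg : 5 ≤ g) (hm : 2 ≤ m) (j : ZMod (g - 1)) (dd : ℕ) (i' : ZMod (g - 1))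
    (hA : ¬ (j = i' ∧ dd = 1)) (hB : ¬ (j = i' + 1 ∧ dd = 2 * m - 1)) :
    phiL g j dd (Hfn g m s r istar (fxB g m i')) = 0 := by
  rw [Hfn_fxB g m s r istar hg, V_fx2 g m i' hg hm, map_add, phiL_EE, phiL_EE,
    if_neg hA, if_neg hB, add_zero]

lemma phi_fxB_self (hg : 5 ≤ g) (hm : 2 ≤ m) (i : ZMod (g - 1)) :
    phiL g i 1 (Hfn g m s r istar (fxB g m i)) = 1 := by
  rw [Hfn_fxB g m s r istar hg, V_fx2 g m i hg hm, map_add, phiL_EE, phiL_EE,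
    if_pos ⟨rfl, rfl⟩, if_neg (fun h => by have := h.2; omega), add_zero]

variable [NeZero (g - 1)]

theorem Hfn_li (hg : 5 ≤ g) (hm : 2 ≤ m) :
    LinearIndependent ℂ (Hfn g m s r istar) := by
  apply Fintype.linearIndependent_iff.mpr
  intro c hc
  have key : ∀ (j : ZMod (g - 1)) (dd : ℕ),
      (∑ x : Idx g m, c x * phiL g j dd (Hfn g m s r istar x)) = 0 := by
    intro j dd
    have h := congrArg (phiL g j dd) hc
    rw [map_sum, map_zero] at h
    simpa [smul_eq_mul] using h
  have single : ∀ (x₀ : Idx g m) (j : ZMod (g - 1)) (dd : ℕ),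
      phiL g j dd (Hfn g m s r istar x₀) = 1 →
      (∀ y : Idx g m, y ≠ x₀ → c y * phiL g j dd (Hfn g m s r istar y) = 0) →
      c x₀ = 0 := by
    intro x₀ j dd hself hoff
    have h := key j dd
    rw [Finset.sum_eq_single x₀ (fun y _ hy => hoff y hy)
      (fun hy => absurd (Finset.mem_univ x₀) hy), hself, mul_one] at h
    exact h
  -- Stage A1 : fixed monomials ω_i^m
  have stA1 : ∀ i : ZMod (g - 1), c (fxA g m i) = 0 := by
    intro i
    apply single (fxA g m i) i 0 (phi_fxA_self g m s r istar hg hm i)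
    intro y hy
    rcases y with ⟨i'', t''⟩ | (i'' | i'')
    · have hz := phi_posX_zero g m s r istar hg hm i 0 i'' t''
        (fun h => by omega) (fun h => by have := t''.2; omega) (fun h => by omega)
      rw [posX] at hz
      rw [hz, mul_zero]
    · have hz := phi_fxA_zero g m s r istar hg hm i 0 i''
        (fun h => hy (congrArg (fxA g m) h.1.symm)) (fun h => by omega)
      rw [fxA] at hz
      rw [hz, mul_zero]
    · have hz := phi_fxB_zero g m s r istar hg hm i 0 i''
        (fun h => by omega) (fun h => by omega)
      rw [fxB] at hz
      rw [hz, mul_zero]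
  -- Stage A2 : fixed monomials ω_i^{m-1} η
  have stA2 : ∀ i : ZMod (g - 1), c (fxB g m i) = 0 := by
    intro i
    apply single (fxB g m i) i 1 (phi_fxB_self g m s r istar hg hm i)
    intro y hy
    rcases y with ⟨i'', t''⟩ | (i'' | i'')
    · have hz := phi_posX_zero g m s r istar hg hm i 1 i'' t''
        (fun h => by omega) (fun h => by have := t''.2; omega) (fun h => by omega)
      rw [posX] at hz
      rw [hz, mul_zero]
    · have hz := phi_fxA_zero g m s r istar hg hm i 1 i''
        (fun h => by omega) (fun h => by omega)
      rw [fxA] at hz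
      rw [hz, mul_zero]
    · have hz := phi_fxB_zero g m s r istar hg hm i 1 i''
        (fun h => hy (congrArg (fxB g m) h.1.symm)) (fun h => by omega)
      rw [fxB] at hz
      rw [hz, mul_zero]
  -- Stage B : low positions
  have stB : ∀ (i' : ZMod (g - 1)) (t' : Fin (2 * m - 3)), (t' : ℕ) + 2 < m →
      c (posX g m i' t') = 0 := by
    intro i' t' hlow
    apply single (posX g m i' t') i' ((t' : ℕ) + 2)
      (phi_posX_self g m s r istar hg hm i' t')
    intro y hy
    rcases y with ⟨i'', t''⟩ | (i'' | i'')
    · have hz := phi_posX_zero g m s r istar hg hm i' ((t' : ℕ) + 2) i'' t''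
        (fun h => hy (by rw [posX, show t'' = t' from Fin.ext (by omega), ← h.1]))
        (fun h => by have := t''.2; omega) (fun h => by omega)
      rw [posX] at hz
      rw [hz, mul_zero]
    · have hz := phi_fxA_zero g m s r istar hg hm i' ((t' : ℕ) + 2) i''
        (fun h => by omega) (fun h => by have := t'.2; omega)
      rw [fxA] at hz
      rw [hz, mul_zero]
    · have hz := phi_fxB_zero g m s r istar hg hm i' ((t' : ℕ) + 2) i''
        (fun h => by omega) (fun h => by have := t'.2; omega)
      rw [fxB] at hz
      rw [hz, mul_zero]
  -- the swap position
  have htm : (m - 2) < 2 * m - 3 := by omega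
  obtain ⟨tm, htmv⟩ : ∃ t : Fin (2 * m - 3), (t : ℕ) = m - 2 := ⟨⟨m - 2, htm⟩, rfl⟩
  have htmval : (tm : ℕ) + 2 = m := by rw [htmv]; omega
  -- Stage C : the position (istar, m)
  have stC : c (posX g m istar tm) = 0 := by
    have hself := phi_posX_self g m s r istar hg hm istar tm
    rw [htmval] at hself
    apply single (posX g m istar tm) istar m hself
    intro y hy
    rcases y with ⟨i'', t''⟩ | (i'' | i'')
    · have hz := phi_posX_zero g m s r istar hg hm istar m i'' t''
        (fun h => hy (by
          obtain ⟨h1, h2⟩ := h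
          rw [posX, show t'' = tm from Fin.ext (by rw [htmv]; omega), ← h1]))
        (fun h => by have := t''.2; omega)
        (fun h => hy (by
          obtain ⟨h1, h2⟩ := h
          obtain ⟨hs0, hieq, hdeq⟩ := h2
          rw [posX, show t'' = tm from Fin.ext (by rw [htmv]; omega), hieq]))
      rw [posX] at hz
      rw [hz, mul_zero]
    · have hz := phi_fxA_zero g m s r istar hg hm istar m i''
        (fun h => by omega) (fun h => by omega)
      rw [fxA] at hz
      rw [hz, mul_zero]
    · have hz := phi_fxB_zero g m s r istar hg hm istar m i''
        (fun h => by omega) (fun h => by omega)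
      rw [fxB] at hz
      rw [hz, mul_zero]
  -- Stage D : positions (i, m)
  have stD : ∀ (i' : ZMod (g - 1)) (t' : Fin (2 * m - 3)), (t' : ℕ) + 2 = m →
      c (posX g m i' t') = 0 := by
    intro i' t' hdm
    by_cases hxC : posX g m i' t' = posX g m istar tm
    · rw [hxC]; exact stC
    · have hself := phi_posX_self g m s r istar hg hm i' t'
      rw [hdm] at hself
      apply single (posX g m i' t') i' m hself
      intro y hy
      rcases y with ⟨i'', t''⟩ | (i'' | i'')
      · by_cases hyC : (Sum.inl (i'', t'') : Idx g m) = posX g m istar tm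
        · rw [show (Sum.inl (i'', t'') : Idx g m) = posX g m istar tm from hyC, stC, zero_mul]
        · have hz := phi_posX_zero g m s r istar hg hm i' m i'' t''
            (fun h => hy (by
              obtain ⟨h1, h2⟩ := h
              rw [posX, show t'' = t' from Fin.ext (by omega), ← h1]))
            (fun h => by have := t''.2; omega)
            (fun h => hyC (by
              obtain ⟨h1, h2⟩ := h
              obtain ⟨hs0, hieq, hdeq⟩ := h2
              rw [posX, show t'' = tm from Fin.ext (by rw [htmv]; omega), hieq]))
          rw [posX] at hz
          rw [hz, mul_zero]
      · have hz := phi_fxA_zero g m s r istar hg hm i' m i''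
          (fun h => by omega) (fun h => by omega)
        rw [fxA] at hz
        rw [hz, mul_zero]
      · have hz := phi_fxB_zero g m s r istar hg hm i' m i''
          (fun h => by omega) (fun h => by omega)
        rw [fxB] at hz
        rw [hz, mul_zero]
  -- Stage E : high positions
  have stE : ∀ (i' : ZMod (g - 1)) (t' : Fin (2 * m - 3)), m < (t' : ℕ) + 2 →
      c (posX g m i' t') = 0 := by
    intro i' t' hhigh
    apply single (posX g m i' t') i' ((t' : ℕ) + 2)
      (phi_posX_self g m s r istar hg hm i' t')
    intro y hy
    rcases y with ⟨i'', t''⟩ | (i'' | i'')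
    · by_cases hlow : (t'' : ℕ) + 2 < m
      · have hz := stB i'' t'' hlow
        rw [posX] at hz
        rw [hz, zero_mul]
      · have hz := phi_posX_zero g m s r istar hg hm i' ((t' : ℕ) + 2) i'' t''
          (fun h => hy (by rw [posX, show t'' = t' from Fin.ext (by omega), ← h.1]))
          (fun h => hlow h.2.2) (fun h => by omega)
        rw [posX] at hz
        rw [hz, mul_zero]
    · have hz := phi_fxA_zero g m s r istar hg hm i' ((t' : ℕ) + 2) i''
        (fun h => by omega) (fun h => by have := t'.2; omega)
      rw [fxA] at hz
      rw [hz, mul_zero]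
    · have hz := phi_fxB_zero g m s r istar hg hm i' ((t' : ℕ) + 2) i''
        (fun h => by omega) (fun h => by have := t'.2; omega)
      rw [fxB] at hz
      rw [hz, mul_zero]
  intro x
  rcases x with ⟨i, t⟩ | (i | i)
  · rcases lt_trichotomy ((t : ℕ) + 2) m with h | h | h
    · exact stB i t h
    · exact stD i t h
    · exact stE i t h
  · exact stA1 i
  · exact stA2 i

end Ind

/-! ### Spanning -/

section Span

variable (g m : ℕ) (s : ℤ) (r : ZMod (g - 1) → ℤ) (istar : ZMod (g - 1)) [NeZero (g - 1)]

lemma card_FmM (hm : 2 ≤ m) (x : Idx g m) : Multiset.card (FmM g m s r istar x) = m := by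
  rcases x with ⟨i, t⟩ | (i | i)
  · show Multiset.card (chooseM g m s r istar i ((t : ℕ) + 2)) = m
    have hd2 : 2 ≤ (t : ℕ) + 2 := by omega
    have hdu : (t : ℕ) + 2 ≤ 2 * m - 2 := by have := t.2; omega
    rw [chooseM]
    split_ifs with h1 h2
    · rw [etaM, card_msM]
      omega
    · rw [mixedM, card_msM]
      omega
    · rw [pureM, card_msM]
      have := pure_facts g m s r i ((t : ℕ) + 2) hm hd2 hdu
      omega
  · show Multiset.card (fx1 g m i) = m
    rw [fx1, card_msM]
    omega
  · show Multiset.card (fx2 g m i) = m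
    rw [fx2, card_msM]
    omega

lemma const_eq_sum (k : ℕ) :
    (fun _ => RatFunc.X ^ (-(k : ℤ)) : Pro g) = ∑ j' : ZMod (g - 1), EE g j' k := by
  funext j
  rw [Finset.sum_apply]
  simp [EE, Pi.single_apply]

lemma EE_mem_span (hg : 5 ≤ g) (hm : 2 ≤ m) (j : ZMod (g - 1)) (d : ℕ)
    (hd2 : 2 ≤ d) (hdu : d ≤ 2 * m - 2) :
    EE g j d ∈ Submodule.span ℂ (Set.range (Hfn g m s r istar)) := by
  have htf : d - 2 < 2 * m - 3 := by omega
  obtain ⟨td, htd⟩ : ∃ t : Fin (2 * m - 3), (t : ℕ) = d - 2 := ⟨⟨d - 2, htf⟩, rfl⟩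
  have htd2 : (td : ℕ) + 2 = d := by omega
  by_cases hsw : swapQ g m s istar j d
  · obtain ⟨hs0, hjeq, hdm⟩ := hsw
    have hval : Hfn g m s r istar (posX g m j td) = fun _ => RatFunc.X ^ (-(d : ℤ)) := by
      rw [Hfn_posX g m s r istar hg, htd2,
        V_choose_swap g m s r istar j d ⟨hs0, hjeq, hdm⟩, hdm]
    have hone : ∀ j' : ZMod (g - 1), j' ≠ j →
        EE g j' d ∈ Set.range (Hfn g m s r istar) := by
      intro j' hne
      refine ⟨posX g m j' td, ?_⟩
      rw [Hfn_posX g m s r istar hg, htd2]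
      exact V_choose_pure g m s r istar j' d hg hm hd2 hdu
        (fun h => hne (h.2.1.trans hjeq.symm)) (fun h => by omega)
    have hsplit : EE g j d = Hfn g m s r istar (posX g m j td) -
        ∑ j' ∈ Finset.univ.erase j, EE g j' d := by
      rw [hval, const_eq_sum g d, ← Finset.add_sum_erase _ _ (Finset.mem_univ j)]
      ring
    rw [hsplit]
    exact sub_mem (Submodule.subset_span ⟨posX g m j td, rfl⟩)
      (Submodule.sum_mem _ (fun j' hj' =>
        Submodule.subset_span (hone j' (Finset.ne_of_mem_erase hj'))))
  · by_cases hmx : hiQ g s r j ∧ d < m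
    · have hval : Hfn g m s r istar (posX g m j td) =
          EE g j d + EE g (j + 1) (2 * m - d) := by
        rw [Hfn_posX g m s r istar hg, htd2]
        exact V_choose_mixed g m s r istar j d hg hd2 hmx
      have htf2 : 2 * m - d - 2 < 2 * m - 3 := by omega
      obtain ⟨tp, htp⟩ : ∃ t : Fin (2 * m - 3), (t : ℕ) = 2 * m - d - 2 :=
        ⟨⟨2 * m - d - 2, htf2⟩, rfl⟩
      have htp2 : (tp : ℕ) + 2 = 2 * m - d := by omega
      have hpart : Hfn g m s r istar (posX g m (j + 1) tp) = EE g (j + 1) (2 * m - d) := by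
        rw [Hfn_posX g m s r istar hg, htp2]
        exact V_choose_pure g m s r istar (j + 1) (2 * m - d) hg hm (by omega) (by omega)
          (fun h => by have := h.2.2; omega) (fun h => by have := h.2; omega)
      have hsplit : EE g j d = Hfn g m s r istar (posX g m j td) -
          Hfn g m s r istar (posX g m (j + 1) tp) := by
        rw [hval, hpart]
        ring
      rw [hsplit]
      exact sub_mem (Submodule.subset_span ⟨_, rfl⟩) (Submodule.subset_span ⟨_, rfl⟩)
    · apply Submodule.subset_span
      refine ⟨posX g m j td, ?_⟩
      rw [Hfn_posX g m s r istar hg, htd2]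
      exact V_choose_pure g m s r istar j d hg hm hd2 hdu hsw hmx

lemma one_mem_span (hg : 5 ≤ g) (hm : 2 ≤ m) (i : ZMod (g - 1)) (a k : ℕ)
    (ha : 1 ≤ a) (hak : a + k = m) :
    Vfun g (msM g i a 0 k) ∈ Submodule.span ℂ (Set.range (Hfn g m s r istar)) := by
  rw [V_msM_one g hg i k ha]
  by_cases hk2 : 2 ≤ k
  · exact add_mem (EE_mem_span g m s r istar hg hm i k hk2 (by omega))
      (EE_mem_span g m s r istar hg hm (i + 1) (2 * a + k) (by omega) (by omega))
  · interval_cases k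
    · apply Submodule.subset_span
      refine ⟨fxA g m i, ?_⟩
      rw [Hfn_fxA g m s r istar hg, V_fx1 g m i hg hm, show 2 * a + 0 = 2 * m by omega]
    · apply Submodule.subset_span
      refine ⟨fxB g m i, ?_⟩
      rw [Hfn_fxB g m s r istar hg, V_fx2 g m i hg hm, show 2 * a + 1 = 2 * m - 1 by omega]

theorem span_Hfn (hg : 5 ≤ g) (hm : 2 ≤ m) :
    Submodule.span ℂ (Set.range (Hfn g m s r istar)) = UC g m := by
  apply le_antisymm
  · rw [Submodule.span_le]
    rintro _ ⟨x, rfl⟩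
    exact Submodule.subset_span ⟨FmM g m s r istar x, card_FmM g m s r istar hm x, rfl⟩
  · rw [UC, Submodule.span_le]
    rintro p ⟨σ, hcard, rfl⟩
    rw [prod_eq_V g hg σ]
    by_cases hE : ∃ j₀, Adm g σ j₀
    · obtain ⟨j₀, hAdm⟩ := hE
      have hsupp : ∀ v ∈ σ, v = Sum.inl (j₀ - 1) ∨ v = Sum.inl j₀ ∨ v = Sum.inr () := by
        rintro (i | u) hv
        · rcases hAdm i hv with h | h
          · exact Or.inl (by rw [h])
          · exact Or.inr (Or.inl (by rw [h]))
        · exact Or.inr (Or.inr rfl)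
      have hσ : σ = msM g (j₀ - 1) (σ.count (Sum.inl (j₀ - 1))) (σ.count (Sum.inl j₀))
          (σ.count (Sum.inr ())) := by
        apply Multiset.ext.mpr
        intro v
        rcases v with i | u
        · rw [count_inl_msM, sub_add_cancel]
          by_cases h1 : i = j₀ - 1
          · rw [if_pos h1, if_neg (fun h2 => (sub_one_ne g hg j₀) (by rw [← h1, h2])),
              add_zero, h1]
          · by_cases h2 : i = j₀
            · rw [if_neg h1, if_pos h2, zero_add, h2]
            · rw [if_neg h1, if_neg h2, add_zero]
              apply Multiset.count_eq_zero_of_notMem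
              intro hv
              rcases hsupp _ hv with h | h | h
              · exact h1 (by simpa using h)
              · exact h2 (by simpa using h)
              · simp at h
        · obtain rfl : u = () := rfl
          rw [count_inr_msM]
      set a := σ.count (Sum.inl (j₀ - 1)) with hadef
      set b := σ.count (Sum.inl j₀) with hbdef
      set k := σ.count (Sum.inr ()) with hkdef
      have habk : a + b + k = m := by
        have h1 := card_msM g (j₀ - 1) a b k
        rw [← hσ, hcard] at h1
        omega
      rw [hσ]
      rcases Nat.eq_zero_or_pos a with ha0 | ha1 <;> rcases Nat.eq_zero_or_pos b with hb0 | hb1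
      · -- eta^m
        rw [ha0, hb0, V_msM_eta, const_eq_sum g k]
        exact Submodule.sum_mem _ (fun j' _ =>
          EE_mem_span g m s r istar hg hm j' k (by omega) (by omega))
      · -- only ω_{j₀}
        rw [ha0, show msM g (j₀ - 1) 0 b k = msM g j₀ b 0 k by
          rw [msM, msM, sub_add_cancel]; simp [Multiset.replicate_zero]]
        exact one_mem_span g m s r istar hg hm j₀ b k hb1 (by omega)
      · -- only ω_{j₀ - 1}
        rw [hb0]
        exact one_mem_span g m s r istar hg hm (j₀ - 1) a k ha1 (by omega)
      · -- two adjacent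
        rw [V_msM_pair g hg (j₀ - 1) k ha1 hb1, sub_add_cancel]
        exact EE_mem_span g m s r istar hg hm j₀ (2 * a + k) (by omega) (by omega)
    · have hz : Vfun g σ = 0 := by
        funext j
        rw [Vfun, if_neg (fun h => hE ⟨j, h⟩)]
        rfl
      rw [hz]
      exact zero_mem _

end Span

/-! ### Weights -/

def wtM (g : ℕ) (ρ : CIdx g → ℤ) (σ : Multiset (CIdx g)) : ℤ := (σ.map ρ).sum

lemma wt_msM (g : ℕ) (ρ : CIdx g → ℤ) (i : ZMod (g - 1)) (a b k : ℕ) :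
    wtM g ρ (msM g i a b k) =
      (a : ℤ) * ρ (Sum.inl i) + (b : ℤ) * ρ (Sum.inl (i + 1)) + (k : ℤ) * ρ (Sum.inr ()) := by
  rw [wtM, msM]
  simp only [Multiset.map_add, Multiset.map_replicate, Multiset.sum_add,
    Multiset.sum_replicate, nsmul_eq_mul]

def uuN (m d : ℕ) : ℕ :=
  if d < m then d / 2 else (min (d - 2) (2 * m - 2 - d) - d % 2) / 2

def loW (g m : ℕ) (s : ℤ) (r : ZMod (g - 1) → ℤ) (i : ZMod (g - 1)) (d : ℕ) : ℤ :=
  ((d / 2 : ℕ) : ℤ) * r (i - 1) + ((m - (d + d % 2) / 2 : ℕ) : ℤ) * r i +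
    ((d % 2 : ℕ) : ℤ) * s

lemma wt_choose (g m : ℕ) (s : ℤ) (r : ZMod (g - 1) → ℤ) (istar : ZMod (g - 1))
    (ρ : CIdx g → ℤ) (hg : 5 ≤ g) (hm : 2 ≤ m)
    (hst : s < 0 → 2 * s < pW g r istar)
    (hrs : ∀ z, ρ (Sum.inl z) = r z) (hss : ρ (Sum.inr ()) = s)
    (i : ZMod (g - 1)) (d : ℕ) (hd2 : 2 ≤ d) (hdu : d ≤ 2 * m - 2) :
    wtM g ρ (chooseM g m s r istar i d) =
      loW g m s r i d + (if hiQ g s r i then (uuN m d : ℤ) * (2 * s - pW g r i) else 0)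
        + (if swapQ g m s istar i d then 2 * s - pW g r i else 0) := by
  rw [chooseM]
  by_cases hsw : swapQ g m s istar i d
  · have hhi : hiQ g s r i := ⟨hsw.1, by rw [hsw.2.1]; exact hst hsw.1⟩
    have hdm := hsw.2.2
    rw [if_pos hsw, if_pos hhi, if_pos hsw, etaM, wt_msM, loW, pW]
    subst hdm
    simp only [hrs, hss, Nat.cast_zero, zero_mul, zero_add, add_zero]
    have e1 : ((d - (d + d % 2) / 2 : ℕ) : ℤ) = ((d / 2 : ℕ) : ℤ) := by omega
    have e2 : (uuN d d : ℤ) = ((d / 2 : ℕ) : ℤ) - 1 := by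
      rw [uuN, if_neg (lt_irrefl d)]
      omega
    have e3 : (d : ℤ) * s = (2 * ((d / 2 : ℕ) : ℤ) + ((d % 2 : ℕ) : ℤ)) * s := by
      have : (d : ℤ) = 2 * ((d / 2 : ℕ) : ℤ) + ((d % 2 : ℕ) : ℤ) := by omega
      rw [← this]
    rw [e1, e2, e3]
    ring
  · rw [if_neg hsw, if_neg hsw]
    by_cases hmx : hiQ g s r i ∧ d < m
    · rw [if_pos hmx, if_pos hmx.1, mixedM, wt_msM, loW, pW]
      simp only [hrs, hss, Nat.cast_zero, zero_mul, zero_add, add_zero]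
      have e1 : ((m - d : ℕ) : ℤ) = ((m - (d + d % 2) / 2 : ℕ) : ℤ) - ((d / 2 : ℕ) : ℤ) := by
        omega
      have e2 : (uuN m d : ℤ) = ((d / 2 : ℕ) : ℤ) := by
        rw [uuN, if_pos hmx.2]
      have e3 : (d : ℤ) * s = (2 * ((d / 2 : ℕ) : ℤ) + ((d % 2 : ℕ) : ℤ)) * s := by
        have : (d : ℤ) = 2 * ((d / 2 : ℕ) : ℤ) + ((d % 2 : ℕ) : ℤ) := by omega
        rw [← this]
      rw [e1, e2, e3]
      ring
    · rw [if_neg hmx, pureM, wt_msM, sub_add_cancel, loW, pW]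
      simp only [hrs, hss]
      by_cases hhi : hiQ g s r i
      · have hdm : ¬ d < m := fun h => hmx ⟨hhi, h⟩
        rw [if_pos hhi]
        have hkc : kcN g m s r i d = min (d - 2) (2 * m - 2 - d) := by
          rw [kcN, if_pos hhi]
        have e1 : ((acN g m s r i d : ℕ) : ℤ) = ((d / 2 : ℕ) : ℤ) - (uuN m d : ℤ) := by
          simp only [acN, hkc, uuN, if_neg hdm]
          omega
        have e2 : ((bcN g m s r i d : ℕ) : ℤ) =
            ((m - (d + d % 2) / 2 : ℕ) : ℤ) - (uuN m d : ℤ) := by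
          simp only [bcN, acN, hkc, uuN, if_neg hdm]
          omega
        have e3 : ((kcN g m s r i d : ℕ) : ℤ) =
            ((d % 2 : ℕ) : ℤ) + 2 * (uuN m d : ℤ) := by
          simp only [hkc, uuN, if_neg hdm]
          omega
        rw [e1, e2, e3]
        ring
      · rw [if_neg hhi]
        have hkc : kcN g m s r i d = d % 2 := by rw [kcN, if_neg hhi]
        have e1 : ((acN g m s r i d : ℕ) : ℤ) = ((d / 2 : ℕ) : ℤ) := by
          simp only [acN, hkc]
          omega
        have e2 : ((bcN g m s r i d : ℕ) : ℤ) = ((m - (d + d % 2) / 2 : ℕ) : ℤ) := by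
          simp only [bcN, acN, hkc]
          omega
        have e3 : ((kcN g m s r i d : ℕ) : ℤ) = ((d % 2 : ℕ) : ℤ) := by rw [hkc]
        rw [e1, e2, e3]
        ring

lemma sum_mod2 (q : ℕ) : (∑ t ∈ Finset.range q, t % 2) = q / 2 := by
  induction q with
  | zero => simp
  | succ n ih => rw [Finset.sum_range_succ, ih]; omega

lemma sum_min (k : ℕ) : (∑ d ∈ Finset.range (2 * k + 1), min d (2 * k - d)) = k * k := by
  induction k with
  | zero => simp
  | succ n ih =>
    have h1 : 2 * (n + 1) + 1 = (2 * n + 2) + 1 := by omega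
    rw [h1, Finset.sum_range_succ, Finset.sum_range_succ']
    have h2 : ∀ i ∈ Finset.range (2 * n + 1),
        min (i + 1) (2 * (n + 1) - (i + 1)) = min i (2 * n - i) + 1 := by
      intro i hi
      have := Finset.mem_range.1 hi
      omega
    rw [Finset.sum_congr rfl h2, Finset.sum_add_distrib]
    rw [ih]
    simp only [Finset.sum_const, Finset.card_range, smul_eq_mul, mul_one]
    have h3 : min (2 * n + 2) (2 * (n + 1) - (2 * n + 2)) = 0 := by omega
    have h4 : min 0 (2 * (n + 1) - 0) = 0 := by omega
    rw [h3, h4]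
    ring

lemma sum_uuN (m : ℕ) (hm : 2 ≤ m) :
    2 * (∑ t ∈ Finset.range (2 * m - 3), uuN m (t + 2)) = (m - 1) * (m - 2) := by
  obtain ⟨M, rfl⟩ : ∃ M, m = M + 2 := ⟨m - 2, by omega⟩
  have hr : 2 * (M + 2) - 3 = 2 * M + 1 := by omega
  rw [hr]
  have key : ∀ t ∈ Finset.range (2 * M + 1),
      2 * uuN (M + 2) (t + 2) + t % 2 = min (t + 2) (2 * (M + 1) - (t + 2)) := by
    intro t ht
    have := Finset.mem_range.1 ht
    rw [uuN]
    split_ifs <;> omega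
  have hsum1 : (∑ t ∈ Finset.range (2 * M + 1), (2 * uuN (M + 2) (t + 2) + t % 2)) =
      ∑ t ∈ Finset.range (2 * M + 1), min (t + 2) (2 * (M + 1) - (t + 2)) :=
    Finset.sum_congr rfl key
  rw [Finset.sum_add_distrib, sum_mod2] at hsum1
  have hsum2 : (∑ d ∈ Finset.range (2 * (M + 1) + 1), min d (2 * (M + 1) - d)) =
      (∑ t ∈ Finset.range (2 * M + 1), min (t + 2) (2 * (M + 1) - (t + 2)))
        + min 1 (2 * (M + 1) - 1) + min 0 (2 * (M + 1) - 0) := by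
    have h1 : 2 * (M + 1) + 1 = (2 * M + 2) + 1 := by omega
    rw [h1, Finset.sum_range_succ']
    congr 1
    have h2 : 2 * M + 2 = (2 * M + 1) + 1 := by omega
    rw [h2, Finset.sum_range_succ']
  rw [sum_min] at hsum2
  have hmins : min 1 (2 * (M + 1) - 1) = 1 ∧ min 0 (2 * (M + 1) - 0) = 0 := by omega
  have hmul : (M + 1) * (M + 1) = (M + 2 - 1) * (M + 2 - 2) + M + 1 := by
    have e : M + 2 - 1 = M + 1 := by omega
    have e2 : M + 2 - 2 = M := by omega
    rw [e, e2]
    ring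
  have hfs : ∑ t ∈ Finset.range (2 * M + 1), 2 * uuN (M + 2) (t + 2) =
      2 * ∑ t ∈ Finset.range (2 * M + 1), uuN (M + 2) (t + 2) := by
    rw [Finset.mul_sum]
  rw [hfs] at hsum1
  omega

section Total

variable (g m : ℕ) (s : ℤ) (r : ZMod (g - 1) → ℤ) (istar : ZMod (g - 1)) (ρ : CIdx g → ℤ)
variable [NeZero (g - 1)]

lemma sum_shift (f : ZMod (g - 1) → ℤ) :
    (∑ i : ZMod (g - 1), f (i - 1)) = ∑ i : ZMod (g - 1), f i :=
  Fintype.sum_equiv (Equiv.subRight (1 : ZMod (g - 1))) _ _ (fun _ => rfl)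

theorem wt_total (hg : 5 ≤ g) (hm : 2 ≤ m) (hgm : g ≤ 2 * m + 1)
    (hrs : ∀ z, ρ (Sum.inl z) = r z) (hss : ρ (Sum.inr ()) = s)
    (hsum0 : (∑ i : ZMod (g - 1), r i) + s = 0)
    (hstm : ∀ i, pW g r i ≤ pW g r istar) :
    (∑ x : Idx g m, wtM g ρ (FmM g m s r istar x)) ≤ 0 := by
  have hcard : (Fintype.card (ZMod (g - 1))) = g - 1 := ZMod.card _
  have hcardz : ((Fintype.card (ZMod (g - 1)) : ℕ) : ℤ) = (g : ℤ) - 1 := by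
    rw [hcard]; omega
  set R := ∑ i : ZMod (g - 1), r i with hR
  -- sum of the pair weights
  have hsump : (∑ i : ZMod (g - 1), pW g r i) = 2 * R := by
    rw [hR]
    have : (∑ i : ZMod (g - 1), pW g r i) =
        (∑ i : ZMod (g - 1), r (i - 1)) + ∑ i : ZMod (g - 1), r i := by
      rw [← Finset.sum_add_distrib]
      rfl
    rw [this, sum_shift]
    ring
  -- maximality consequences
  have hmaxsum : 2 * R ≤ ((g : ℤ) - 1) * pW g r istar := by
    have h1 := Finset.sum_le_card_nsmul Finset.univ (pW g r) (pW g r istar)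
      (fun i _ => hstm i)
    rw [hsump] at h1
    rwa [Finset.card_univ, nsmul_eq_mul, hcardz] at h1
  have hstar : s < 0 → 2 * s < pW g r istar := by
    intro hs0
    by_contra hcon
    push_neg at hcon
    have h2 : ((g : ℤ) - 1) * pW g r istar ≤ ((g : ℤ) - 1) * (2 * s) := by
      apply mul_le_mul_of_nonneg_left hcon
      have : (5 : ℤ) ≤ (g : ℤ) := by exact_mod_cast hg
      linarith
    have h3 : 2 * R = -(2 * s) := by linarith [hsum0]
    have : (5 : ℤ) ≤ (g : ℤ) := by exact_mod_cast hg
    nlinarith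
  -- decompose the sum
  rw [Fintype.sum_sum_type, Fintype.sum_sum_type, Fintype.sum_prod_type]
  -- fixed parts
  have hfx1 : (∑ i : ZMod (g - 1), wtM g ρ (FmM g m s r istar (Sum.inr (Sum.inl i)))) =
      (m : ℤ) * R := by
    have h1 : ∀ i : ZMod (g - 1), wtM g ρ (FmM g m s r istar (Sum.inr (Sum.inl i))) =
        (m : ℤ) * r i := by
      intro i
      show wtM g ρ (fx1 g m i) = (m : ℤ) * r i
      rw [fx1, wt_msM]
      simp [hrs, hss]
    rw [Finset.sum_congr rfl (fun i _ => h1 i), ← Finset.mul_sum]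
  have hfx2 : (∑ i : ZMod (g - 1), wtM g ρ (FmM g m s r istar (Sum.inr (Sum.inr i)))) =
      ((m : ℤ) - 1) * R + ((g : ℤ) - 1) * s := by
    have h1 : ∀ i : ZMod (g - 1), wtM g ρ (FmM g m s r istar (Sum.inr (Sum.inr i))) =
        ((m : ℤ) - 1) * r i + s := by
      intro i
      show wtM g ρ (fx2 g m i) = ((m : ℤ) - 1) * r i + s
      rw [fx2, wt_msM]
      simp only [hrs, hss, Nat.cast_zero, zero_mul, add_zero, Nat.cast_one, one_mul]
      have : ((m - 1 : ℕ) : ℤ) = (m : ℤ) - 1 := by omega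
      rw [this]
    rw [Finset.sum_congr rfl (fun i _ => h1 i), Finset.sum_add_distrib, ← Finset.mul_sum,
      Finset.sum_const, Finset.card_univ, nsmul_eq_mul, hcardz]
  -- positions
  set SU := ∑ t ∈ Finset.range (2 * m - 3), uuN m (t + 2) with hSU
  set T := ∑ i : ZMod (g - 1), (if hiQ g s r i then 2 * s - pW g r i else 0) with hT
  set Wsw : ℤ := if s < 0 then 2 * s - pW g r istar else 0 with hWsw
  have hSUz : ∀ i : ZMod (g - 1), (∑ t : Fin (2 * m - 3), (uuN m ((t : ℕ) + 2) : ℤ)) =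
      (SU : ℤ) := by
    intro i
    rw [hSU]
    rw [Fin.sum_univ_eq_sum_range (fun t => ((uuN m (t + 2) : ℕ) : ℤ))]
    push_cast
    rfl
  have hpos : (∑ i : ZMod (g - 1), ∑ t : Fin (2 * m - 3),
      wtM g ρ (FmM g m s r istar (Sum.inl (i, t)))) =
      ((2 * (m : ℤ) - 3) * (m : ℤ) - ((m : ℤ) - 2)) * R + ((m : ℤ) - 2) * ((g : ℤ) - 1) * s
        + (SU : ℤ) * T + Wsw := by
    have hterm : ∀ (i : ZMod (g - 1)) (t : Fin (2 * m - 3)),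
        wtM g ρ (FmM g m s r istar (Sum.inl (i, t))) =
          loW g m s r i ((t : ℕ) + 2)
            + (if hiQ g s r i then (uuN m ((t : ℕ) + 2) : ℤ) * (2 * s - pW g r i) else 0)
            + (if swapQ g m s istar i ((t : ℕ) + 2) then 2 * s - pW g r i else 0) := by
      intro i t
      exact wt_choose g m s r istar ρ hg hm hstar hrs hss i ((t : ℕ) + 2) (by omega)
        (by have := t.2; omega)
    rw [Finset.sum_congr rfl (fun i (_ : i ∈ Finset.univ) =>
      Finset.sum_congr rfl (fun t _ => hterm i t))]
    have hsplitsum : ∀ i : ZMod (g - 1), (∑ t : Fin (2 * m - 3),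
        (loW g m s r i ((t : ℕ) + 2)
          + (if hiQ g s r i then (uuN m ((t : ℕ) + 2) : ℤ) * (2 * s - pW g r i) else 0)
          + (if swapQ g m s istar i ((t : ℕ) + 2) then 2 * s - pW g r i else 0))) =
        (∑ t : Fin (2 * m - 3), loW g m s r i ((t : ℕ) + 2))
          + (if hiQ g s r i then (SU : ℤ) * (2 * s - pW g r i) else 0)
          + (∑ t : Fin (2 * m - 3),
              (if swapQ g m s istar i ((t : ℕ) + 2) then 2 * s - pW g r i else 0)) := by
      intro i
      rw [Finset.sum_add_distrib, Finset.sum_add_distrib]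
      congr 1
      congr 1
      by_cases hhi : hiQ g s r i
      · simp only [if_pos hhi, ← Finset.sum_mul, hSUz i]
      · simp only [if_neg hhi, Finset.sum_const_zero]
    rw [Finset.sum_congr rfl (fun i (_ : i ∈ Finset.univ) => hsplitsum i)]
    rw [Finset.sum_add_distrib, Finset.sum_add_distrib]
    -- the lo part
    have hlosum : (∑ i : ZMod (g - 1), ∑ t : Fin (2 * m - 3), loW g m s r i ((t : ℕ) + 2)) =
        ((2 * (m : ℤ) - 3) * (m : ℤ) - ((m : ℤ) - 2)) * R
          + ((m : ℤ) - 2) * ((g : ℤ) - 1) * s := by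
      have hCK : (∑ t ∈ Finset.range (2 * m - 3), (((t + 2) % 2 : ℕ) : ℤ)) =
          (m : ℤ) - 2 := by
        have h1 : ∀ t ∈ Finset.range (2 * m - 3), (t + 2) % 2 = t % 2 := by
          intro t _; omega
        have h2 : (∑ t ∈ Finset.range (2 * m - 3), (t + 2) % 2) = m - 2 := by
          rw [Finset.sum_congr rfl h1, sum_mod2]
          omega
        rw [← Nat.cast_sum, h2]
        omega
      have hCAB : (∑ t ∈ Finset.range (2 * m - 3),
          ((((t + 2) / 2 : ℕ) : ℤ) + ((m - (t + 2 + (t + 2) % 2) / 2 : ℕ) : ℤ))) =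
          (2 * (m : ℤ) - 3) * (m : ℤ) - ((m : ℤ) - 2) := by
        have h1 : ∀ t ∈ Finset.range (2 * m - 3),
            ((((t + 2) / 2 : ℕ) : ℤ) + ((m - (t + 2 + (t + 2) % 2) / 2 : ℕ) : ℤ)) =
              (m : ℤ) - (((t + 2) % 2 : ℕ) : ℤ) := by
          intro t ht
          have := Finset.mem_range.1 ht
          omega
        rw [Finset.sum_congr rfl h1, Finset.sum_sub_distrib, hCK, Finset.sum_const,
          Finset.card_range, nsmul_eq_mul]
        have : ((2 * m - 3 : ℕ) : ℤ) = 2 * (m : ℤ) - 3 := by omega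
        rw [this]
      have hin : ∀ i : ZMod (g - 1),
          (∑ t : Fin (2 * m - 3), loW g m s r i ((t : ℕ) + 2)) =
            (∑ t ∈ Finset.range (2 * m - 3), (((t + 2) / 2 : ℕ) : ℤ)) * r (i - 1)
              + (∑ t ∈ Finset.range (2 * m - 3), ((m - (t + 2 + (t + 2) % 2) / 2 : ℕ) : ℤ))
                  * r i
              + (∑ t ∈ Finset.range (2 * m - 3), (((t + 2) % 2 : ℕ) : ℤ)) * s := by
        intro i
        rw [Fin.sum_univ_eq_sum_range (fun t => loW g m s r i (t + 2))]
        unfold loW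
        rw [Finset.sum_add_distrib, Finset.sum_add_distrib, ← Finset.sum_mul,
          ← Finset.sum_mul, ← Finset.sum_mul]
      rw [Finset.sum_congr rfl (fun i (_ : i ∈ Finset.univ) => hin i)]
      rw [Finset.sum_add_distrib, Finset.sum_add_distrib]
      rw [← Finset.sum_mul, ← Finset.mul_sum, ← Finset.mul_sum, sum_shift]
      rw [Finset.sum_const, Finset.card_univ, nsmul_eq_mul, hcardz]
      have hsplit2 : (∑ t ∈ Finset.range (2 * m - 3), (((t + 2) / 2 : ℕ) : ℤ))
          + (∑ t ∈ Finset.range (2 * m - 3), ((m - (t + 2 + (t + 2) % 2) / 2 : ℕ) : ℤ)) =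
          (2 * (m : ℤ) - 3) * (m : ℤ) - ((m : ℤ) - 2) := by
        rw [← Finset.sum_add_distrib]
        exact hCAB
      linear_combination (∑ i : ZMod (g - 1), r i) * hsplit2 + (((g : ℤ) - 1) * s) * hCK
    rw [hlosum]
    have hHI : (∑ i : ZMod (g - 1), (if hiQ g s r i then (SU : ℤ) * (2 * s - pW g r i) else 0))
        = (SU : ℤ) * T := by
      rw [hT, Finset.mul_sum]
      apply Finset.sum_congr rfl
      intro i _
      split_ifs <;> ring
    have htm2 : (m - 2) < 2 * m - 3 := by omega
    have hSW : (∑ i : ZMod (g - 1), ∑ t : Fin (2 * m - 3),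
        (if swapQ g m s istar i ((t : ℕ) + 2) then 2 * s - pW g r i else 0)) = Wsw := by
      by_cases hs0 : s < 0
      · have hval : ((⟨m - 2, htm2⟩ : Fin (2 * m - 3)) : ℕ) = m - 2 := rfl
        have inner : ∀ i : ZMod (g - 1), (∑ t : Fin (2 * m - 3),
            (if swapQ g m s istar i ((t : ℕ) + 2) then 2 * s - pW g r i else 0)) =
            (if i = istar then 2 * s - pW g r i else 0) := by
          intro i
          by_cases hi : i = istar
          · rw [if_pos hi]
            rw [Finset.sum_eq_single (⟨m - 2, htm2⟩ : Fin (2 * m - 3))]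
            · rw [if_pos ⟨hs0, hi, by rw [hval]; omega⟩]
            · intro t _ htne
              apply if_neg
              rintro ⟨-, -, hdd⟩
              exact htne (Fin.ext (by rw [hval]; omega))
            · intro habs
              exact absurd (Finset.mem_univ _) habs
          · rw [if_neg hi]
            apply Finset.sum_eq_zero
            intro t _
            exact if_neg (fun hcon => hi hcon.2.1)
        rw [Finset.sum_congr rfl (fun i (_ : i ∈ Finset.univ) => inner i),
          Finset.sum_ite_eq' Finset.univ istar (fun i => 2 * s - pW g r i),
          if_pos (Finset.mem_univ istar), hWsw, if_pos hs0]
      · rw [hWsw, if_neg hs0]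
        apply Finset.sum_eq_zero
        intro i _
        apply Finset.sum_eq_zero
        intro t _
        exact if_neg (fun hcon => hs0 hcon.1)
    rw [hHI, hSW]
  rw [hpos, hfx1, hfx2]
  -- final arithmetic
  have hRs : R = -s := by linarith
  have hGz : (5 : ℤ) ≤ (g : ℤ) := by exact_mod_cast hg
  have hMz : (2 : ℤ) ≤ (m : ℤ) := by exact_mod_cast hm
  have hGMz : (g : ℤ) ≤ 2 * (m : ℤ) + 1 := by exact_mod_cast hgm
  have h2SU : 2 * (SU : ℤ) = ((m : ℤ) - 1) * ((m : ℤ) - 2) := by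
    have h1 := sum_uuN m hm
    rw [← hSU] at h1
    have h2 : ((2 * SU : ℕ) : ℤ) = (((m - 1) * (m - 2) : ℕ) : ℤ) := by exact_mod_cast h1
    push_cast at h2
    rw [show ((m - 1 : ℕ) : ℤ) = (m : ℤ) - 1 by omega,
      show ((m - 2 : ℕ) : ℤ) = (m : ℤ) - 2 by omega] at h2
    linarith
  by_cases hs0 : s < 0
  · -- negative eta weight
    have hTb : T ≤ 2 * (g : ℤ) * s := by
      have h1 : T ≤ ∑ i : ZMod (g - 1), (2 * s - pW g r i) := by
        rw [hT]
        apply Finset.sum_le_sum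
        intro i _
        split_ifs with h
        · exact le_refl _
        · rw [hiQ, not_and_or] at h
          rcases h with h | h
          · exact absurd hs0 h
          · push_neg at h
            linarith
      have h2 : (∑ i : ZMod (g - 1), (2 * s - pW g r i)) = 2 * (g : ℤ) * s := by
        rw [Finset.sum_sub_distrib, hsump, Finset.sum_const, Finset.card_univ,
          nsmul_eq_mul, hcardz]
        linarith
      linarith
    have hWb : ((g : ℤ) - 1) * Wsw ≤ 2 * (g : ℤ) * s := by
      rw [hWsw, if_pos hs0]
      have e : ((g : ℤ) - 1) * (2 * s - pW g r istar) =
          2 * (g : ℤ) * s - 2 * s - (((g : ℤ) - 1) * pW g r istar) := by ring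
      rw [e]
      linarith [hmaxsum]
    have hSUnn : (0 : ℤ) ≤ (SU : ℤ) := Int.natCast_nonneg SU
    have hInner : (0 : ℤ) ≤ ((m : ℤ) - 1) ^ 2 * ((g : ℤ) + 4) - 2 * (m : ℤ) ^ 2
        + (m : ℤ) + 2 := by
      nlinarith [sq_nonneg (14 * (m : ℤ) - 17),
        mul_nonneg (by linarith : (0 : ℤ) ≤ (g : ℤ) - 5) (sq_nonneg ((m : ℤ) - 1))]
    have hB : 0 ≤ ((g : ℤ) - 1) * ((g : ℤ) * ((m : ℤ) - 1) - (m : ℤ) * (2 * (m : ℤ) - 1))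
        + (g : ℤ) * (((g : ℤ) - 1) * (((m : ℤ) - 1) * ((m : ℤ) - 2))) + 2 * (g : ℤ) := by
      have hfac : ((g : ℤ) - 1) * ((g : ℤ) * ((m : ℤ) - 1) - (m : ℤ) * (2 * (m : ℤ) - 1))
          + (g : ℤ) * (((g : ℤ) - 1) * (((m : ℤ) - 1) * ((m : ℤ) - 2))) + 2 * (g : ℤ) =
          3 * (2 * (m : ℤ) - 3) ^ 2 + 3 + ((g : ℤ) - 5) *
            (((m : ℤ) - 1) ^ 2 * ((g : ℤ) + 4) - 2 * (m : ℤ) ^ 2 + (m : ℤ) + 2) := by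
        ring
      rw [hfac]
      have h5 : (0 : ℤ) ≤ (g : ℤ) - 5 := by linarith
      linarith [sq_nonneg (2 * (m : ℤ) - 3), mul_nonneg h5 hInner]
    -- combine
    by_contra hcon
    push_neg at hcon
    have hGpos : (0 : ℤ) < (g : ℤ) - 1 := by linarith
    have hprod := mul_pos hGpos hcon
    have e1 : ((g : ℤ) - 1) * ((SU : ℤ) * T) ≤
        ((g : ℤ) - 1) * ((SU : ℤ) * (2 * (g : ℤ) * s)) := by
      apply mul_le_mul_of_nonneg_left _ (by linarith)
      exact mul_le_mul_of_nonneg_left hTb hSUnn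
    have e2 : ((g : ℤ) - 1) * ((SU : ℤ) * (2 * (g : ℤ) * s)) =
        s * ((g : ℤ) * (((g : ℤ) - 1) * (((m : ℤ) - 1) * ((m : ℤ) - 2)))) := by
      linear_combination ((g : ℤ) * ((g : ℤ) - 1) * s) * h2SU
    have eTot : ((g : ℤ) - 1) *
        ((((2 * (m : ℤ) - 3) * (m : ℤ) - ((m : ℤ) - 2)) * R
            + ((m : ℤ) - 2) * ((g : ℤ) - 1) * s + (SU : ℤ) * T + Wsw)
          + ((m : ℤ) * R + (((m : ℤ) - 1) * R + ((g : ℤ) - 1) * s))) =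
        s * (((g : ℤ) - 1) * ((g : ℤ) * ((m : ℤ) - 1) - (m : ℤ) * (2 * (m : ℤ) - 1)))
          + ((g : ℤ) - 1) * ((SU : ℤ) * T) + ((g : ℤ) - 1) * Wsw := by
      rw [hRs]
      ring
    have hsB : s * (((g : ℤ) - 1) * ((g : ℤ) * ((m : ℤ) - 1) - (m : ℤ) * (2 * (m : ℤ) - 1))
        + (g : ℤ) * (((g : ℤ) - 1) * (((m : ℤ) - 1) * ((m : ℤ) - 2))) + 2 * (g : ℤ)) ≤ 0 :=
      mul_nonpos_of_nonpos_of_nonneg (le_of_lt hs0) hB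
    have hexp : s * (((g : ℤ) - 1) * ((g : ℤ) * ((m : ℤ) - 1) - (m : ℤ) * (2 * (m : ℤ) - 1))
        + (g : ℤ) * (((g : ℤ) - 1) * (((m : ℤ) - 1) * ((m : ℤ) - 2))) + 2 * (g : ℤ)) =
        s * (((g : ℤ) - 1) * ((g : ℤ) * ((m : ℤ) - 1) - (m : ℤ) * (2 * (m : ℤ) - 1)))
          + s * ((g : ℤ) * (((g : ℤ) - 1) * (((m : ℤ) - 1) * ((m : ℤ) - 2))))
          + s * (2 * (g : ℤ)) := by ring
    have hs2g : ((g : ℤ) - 1) * Wsw ≤ s * (2 * (g : ℤ)) := by linarith [hWb]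
    linarith [hprod, eTot, e1, e2, hsB, hexp, hs2g]
  · -- nonnegative eta weight
    have hT0 : T = 0 := by
      rw [hT]
      apply Finset.sum_eq_zero
      intro i _
      exact if_neg (fun hcon => hs0 hcon.1)
    have hW0 : Wsw = 0 := by rw [hWsw, if_neg hs0]
    rw [hT0, hW0, hRs]
    push_neg at hs0
    have hc : (g : ℤ) * ((m : ℤ) - 1) - (m : ℤ) * (2 * (m : ℤ) - 1) ≤ -1 := by
      nlinarith [mul_le_mul_of_nonneg_right hGMz (by linarith : (0 : ℤ) ≤ (m : ℤ) - 1)]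
    nlinarith [mul_nonneg hs0 (by linarith :
      (0 : ℤ) ≤ -((g : ℤ) * ((m : ℤ) - 1) - (m : ℤ) * (2 * (m : ℤ) - 1)))]

end Total

end Rosary

theorem rosary_canonical_semistable' (g m : ℕ) (hodd : Odd g) (hg : 5 ≤ g)
    (hm : 2 ≤ m) (hgm : g ≤ 2 * m + 1) [NeZero (g - 1)]
    (ρ : CIdx g → ℤ) (hρ : (∑ i : CIdx g, ρ i) = 0) :
    ∃ S : Finset (CMon g m), IsMonBasisC g m S ∧
      (∑ σ ∈ S, (σ.1.map ρ).sum) ≤ 0 := by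
  classical
  set s : ℤ := ρ (Sum.inr ()) with hs
  set r : ZMod (g - 1) → ℤ := fun i => ρ (Sum.inl i) with hr
  obtain ⟨istar, -, hmax⟩ := Finset.exists_max_image Finset.univ (Rosary.pW g r)
    Finset.univ_nonempty
  have hcard := fun x => Rosary.card_FmM g m s r istar hm x
  set F : Rosary.Idx g m → CMon g m := fun x => ⟨Rosary.FmM g m s r istar x, hcard x⟩ with hF
  have hli := Rosary.Hfn_li g m s r istar hg hm
  have hFinj : Function.Injective F := by
    intro x y hxy
    apply hli.injective
    exact congrArg (fun σ : CMon g m => (σ.1.map (varC g)).prod) hxy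
  have hmem : ∀ x, F x ∈ Finset.image F Finset.univ :=
    fun x => Finset.mem_image_of_mem F (Finset.mem_univ x)
  refine ⟨Finset.image F Finset.univ, ⟨?_, ?_⟩, ?_⟩
  · -- linear independence
    have hbij : Function.Bijective
        (fun x => (⟨F x, hmem x⟩ : {σ // σ ∈ Finset.image F Finset.univ})) := by
      constructor
      · intro a b hab
        apply hFinj
        exact congrArg Subtype.val hab
      · rintro ⟨σ, hσ⟩
        obtain ⟨x, -, rfl⟩ := Finset.mem_image.1 hσ
        exact ⟨x, rfl⟩
    have hcomp : LinearIndependent ℂ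
        ((fun σ : {σ // σ ∈ Finset.image F Finset.univ} =>
          (((σ : CMon g m)).1.map (varC g)).prod) ∘ (Equiv.ofBijective _ hbij)) := hli
    exact (linearIndependent_equiv (Equiv.ofBijective _ hbij)).1 hcomp
  · -- spanning
    have himg : (fun σ : CMon g m => (σ.1.map (varC g)).prod) '' (Finset.image F Finset.univ) =
        Set.range (Rosary.Hfn g m s r istar) := by
      rw [Finset.coe_image, Finset.coe_univ, Set.image_univ, ← Set.range_comp]
      rfl
    rw [himg, Rosary.span_Hfn g m s r istar hg hm]
  · -- weight
    rw [Finset.sum_image (fun x _ y _ h => hFinj h)]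
    have hsum0 : (∑ i : ZMod (g - 1), r i) + s = 0 := by
      rw [Fintype.sum_sum_type] at hρ
      simp only [Finset.univ_unique, Finset.sum_singleton] at hρ
      exact hρ
    exact Rosary.wt_total g m s r istar ρ hg hm hgm (fun z => rfl) rfl hsum0
      (fun i => hmax i (Finset.mem_univ i))

/-- The 'if' direction of Theorem 6.1.  (The instance `NeZero (g-1)`, which follows
from `5 ≤ g`, makes `ℤ/(g-1)` a fintype so that the total weight sum makes sense.) -/
theorem rosary_canonical_semistable (g m : ℕ) (hodd : Odd g) (hg : 5 ≤ g)
    (hm : 2 ≤ m) (hgm : g ≤ 2 * m + 1) [NeZero (g - 1)]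
    (ρ : CIdx g → ℤ) (hρ : (∑ i : CIdx g, ρ i) = 0) :
    ∃ S : Finset (CMon g m), IsMonBasisC g m S ∧
      (∑ σ ∈ S, (σ.1.map ρ).sum) ≤ 0 :=
  rosary_canonical_semistable' g m hodd hg hm hgm ρ hρ

end
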